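/- Let C_a ⊆ ℝ^m be a compact set, let K ⊆ C_a × ℝ^n be a compact set, let l : ℝ^m × ℝ^n → ℝ be continuous, and let M > 0. Define φ : ℝ^m → ℝ by φ(a) = −M if the fiber K_a = {x ∈ ℝ^n : (a,x) ∈ K} is empty, and φ(a) = max(−M, sup_{x ∈ K_a} l(a,x)) otherwise. Then there exists a sequence of polynomials (p_j)_{j ∈ ℕ} in ℝ[a₁,…,a_m] that are feasible, i.e. for every j: l(a,x) ≤ p_j(a) for all (a,x) ∈ K with a ∈ C_a, and −M ≤ p_j(a) for all a ∈ C_a, and whose objective values converge to the optimum: lim_{j → ∞} ∫_{C_a} p_j(a) dμ(a) = ∫_{C_a} φ(a) dμ(a), where μ is the Lebesgue measure restricted to C_a. -/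

import Mathlib

open MeasureTheory Filter

section Aux
variable {m n : ℕ} (K : Set ((Fin m → ℝ) × (Fin n → ℝ))) (l : (Fin m → ℝ) × (Fin n → ℝ) → ℝ)
  (M : ℝ)

noncomputable def gAux (k : ℕ) (a : Fin m → ℝ) : ℝ :=
  max (-M) (sSup ((fun q => l q - (k : ℝ) * dist a q.1) '' K))

variable {K l M}

lemma gAux_bddAbove {C : ℝ} (hC : ∀ q ∈ K, |l q| ≤ C) (k : ℕ) (a : Fin m → ℝ) :
    BddAbove ((fun q => l q - (k : ℝ) * dist a q.1) '' K) := by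
  refine ⟨C, ?_⟩
  rintro y ⟨q, hq, rfl⟩
  dsimp only
  have h0 : 0 ≤ (k : ℝ) * dist a q.1 := mul_nonneg (Nat.cast_nonneg k) dist_nonneg
  have := (abs_le.mp (hC q hq)).2
  linarith

lemma gAux_antitone (hKne : K.Nonempty) {C : ℝ} (hC : ∀ q ∈ K, |l q| ≤ C) (a : Fin m → ℝ) :
    Antitone (fun k => gAux K l M k a) := by
  intro k k' hkk'
  refine max_le_max le_rfl ?_
  refine csSup_le (hKne.image _) ?_
  rintro y ⟨q, hq, rfl⟩
  dsimp only
  have h1 : (k : ℝ) * dist a q.1 ≤ (k' : ℝ) * dist a q.1 :=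
    mul_le_mul_of_nonneg_right (Nat.cast_le.mpr hkk') dist_nonneg
  calc l q - (k' : ℝ) * dist a q.1 ≤ l q - (k : ℝ) * dist a q.1 := by linarith
    _ ≤ _ := le_csSup (gAux_bddAbove hC k a) ⟨q, hq, rfl⟩

lemma gAux_continuous (hKne : K.Nonempty) {C : ℝ} (hC : ∀ q ∈ K, |l q| ≤ C) (k : ℕ) :
    Continuous (gAux K l M k) := by
  have key : ∀ a b : Fin m → ℝ,
      sSup ((fun q => l q - (k : ℝ) * dist a q.1) '' K)
        ≤ sSup ((fun q => l q - (k : ℝ) * dist b q.1) '' K) + (k : ℝ) * dist a b := by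
    intro a b
    refine csSup_le (hKne.image _) ?_
    rintro y ⟨q, hq, rfl⟩
    dsimp only
    have h1 : l q - (k : ℝ) * dist b q.1 ≤ sSup ((fun q => l q - (k : ℝ) * dist b q.1) '' K) :=
      le_csSup (gAux_bddAbove hC k b) ⟨q, hq, rfl⟩
    have h2 : dist b q.1 ≤ dist b a + dist a q.1 := dist_triangle _ _ _
    have h3 : (k : ℝ) * dist b q.1 ≤ (k : ℝ) * (dist b a + dist a q.1) :=
      mul_le_mul_of_nonneg_left h2 (Nat.cast_nonneg k)
    have h4 : dist b a = dist a b := dist_comm _ _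
    rw [mul_add, h4] at h3
    linarith
  have hlip : LipschitzWith (k : NNReal) (fun a => sSup ((fun q => l q - (k : ℝ) * dist a q.1) '' K)) := by
    refine LipschitzWith.of_dist_le_mul fun a b => ?_
    rw [Real.dist_eq, abs_sub_le_iff]
    push_cast
    constructor
    · have := key a b; linarith
    · have := key b a; rw [dist_comm b a] at this; linarith
  exact continuous_const.max hlip.continuous
lemma mv_poly_approx {m : ℕ} {Ca : Set (Fin m → ℝ)} (hCa : IsCompact Ca)
    {g : (Fin m → ℝ) → ℝ} (hg : Continuous g) {ε : ℝ} (hε : 0 < ε) :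
    ∃ p : MvPolynomial (Fin m) ℝ, ∀ a ∈ Ca, |g a - MvPolynomial.eval a p| < ε := by
  haveI : CompactSpace Ca := isCompact_iff_compactSpace.mp hCa
  set coords : Fin m → C(Ca, ℝ) :=
    fun i => ⟨fun a => (a : Fin m → ℝ) i, (continuous_apply i).comp continuous_subtype_val⟩ with hcoords
  set Φ : MvPolynomial (Fin m) ℝ →ₐ[ℝ] C(Ca, ℝ) := MvPolynomial.aeval coords with hΦdef
  have hΦ : ∀ p : MvPolynomial (Fin m) ℝ, ∀ a : Ca,
      Φ p a = MvPolynomial.eval (a : Fin m → ℝ) p := by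
    intro p
    induction p using MvPolynomial.induction_on with
    | C r => intro a; simp [hΦdef]
    | add p q hp hq => intro a; simp [map_add, hp a, hq a]
    | mul_X p i hp => intro a; simp [map_mul, hp a, hΦdef, hcoords]; exact Or.inl (hp a)
  have hsep : (Φ.range).SeparatesPoints := by
    rintro ⟨a, ha⟩ ⟨b, hb⟩ hab
    have : ∃ i, a i ≠ b i := by
      by_contra h; push_neg at h; exact hab (Subtype.ext (funext h))
    obtain ⟨i, hi⟩ := this
    refine ⟨coords i, ⟨⟨coords i, ⟨MvPolynomial.X i, by simp [hΦdef]⟩, rfl⟩, hi⟩⟩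
  obtain ⟨g', hg'⟩ := ContinuousMap.exists_mem_subalgebra_near_continuous_of_separatesPoints
    Φ.range hsep (fun a : Ca => g a) (hg.comp continuous_subtype_val) ε hε
  obtain ⟨p, hp⟩ := g'.2
  refine ⟨p, fun a ha => ?_⟩
  have := hg' ⟨a, ha⟩
  rw [Real.norm_eq_abs] at this
  have h2 : (g' : C(Ca,ℝ)) ⟨a, ha⟩ = MvPolynomial.eval a p := by
    rw [← hp]; exact hΦ p ⟨a, ha⟩
  rw [h2] at this
  rw [abs_sub_comm]
  exact this

/-- Optimality: There is a sequence of feasible polynomial solutions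
(dominating `l` on `K` and `-M` on `C_a`) whose objective values converge to
`∫_{C_a} φ dμ`, where `φ` is the clamped fiberwise supremum function. -/
theorem feasible_polynomials_objective_converges {m n : ℕ}
    (Ca : Set (Fin m → ℝ)) (hCa : IsCompact Ca)
    (K : Set ((Fin m → ℝ) × (Fin n → ℝ))) (hK : IsCompact K)
    (hKCa : ∀ q ∈ K, q.1 ∈ Ca)
    (l : (Fin m → ℝ) × (Fin n → ℝ) → ℝ) (hl : Continuous l)
    (M : ℝ) (hM : 0 < M)
    (φ : (Fin m → ℝ) → ℝ)
    (hφ_empty : ∀ a : Fin m → ℝ, {x : Fin n → ℝ | (a, x) ∈ K} = ∅ → φ a = -M)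
    (hφ_ne : ∀ a : Fin m → ℝ, {x : Fin n → ℝ | (a, x) ∈ K} ≠ ∅ →
      φ a = max (-M) (sSup ((fun x => l (a, x)) '' {x : Fin n → ℝ | (a, x) ∈ K}))) :
    ∃ p : ℕ → MvPolynomial (Fin m) ℝ,
      (∀ j : ℕ, ∀ q ∈ K, q.1 ∈ Ca → l q ≤ MvPolynomial.eval q.1 (p j)) ∧
      (∀ j : ℕ, ∀ a ∈ Ca, -M ≤ MvPolynomial.eval a (p j)) ∧
      Tendsto (fun j : ℕ => ∫ a, MvPolynomial.eval a (p j) ∂(volume.restrict Ca))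
        atTop (nhds (∫ a, φ a ∂(volume.restrict Ca))) := by
  classical
  haveI : IsFiniteMeasure (volume.restrict Ca) :=
    ⟨by rw [Measure.restrict_apply_univ]; exact hCa.measure_lt_top⟩
  set μ := volume.restrict Ca with hμ
  -- trivial case: K empty
  by_cases hKem : K = ∅
  · subst hKem
    have hφM : ∀ a, φ a = -M := fun a => hφ_empty a (by simp)
    refine ⟨fun _ => MvPolynomial.C (-M), by simp, fun j a _ => by simp, ?_⟩
    have : (fun a => φ a) = fun _ : Fin m → ℝ => -M := funext hφM
    rw [this]
    simp only [MvPolynomial.eval_C]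
    exact tendsto_const_nhds
  have hKne : K.Nonempty := Set.nonempty_iff_ne_empty.mpr hKem
  -- bound on l over K
  obtain ⟨C, hC⟩ : ∃ C, ∀ q ∈ K, |l q| ≤ C := hK.exists_bound_of_continuousOn hl.continuousOn
  set B := max M C with hB
  have hCB : C ≤ B := le_max_right _ _
  have hMB : M ≤ B := le_max_left _ _
  -- fiber facts
  have hfib_bdd : ∀ a : Fin m → ℝ,
      BddAbove ((fun x => l (a, x)) '' {x : Fin n → ℝ | (a, x) ∈ K}) := by
    intro a
    refine ⟨C, ?_⟩
    rintro y ⟨x, hx, rfl⟩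
    exact (abs_le.mp (hC _ hx)).2
  have hφ_lb : ∀ a, -M ≤ φ a := by
    intro a
    by_cases h : {x : Fin n → ℝ | (a, x) ∈ K} = ∅
    · rw [hφ_empty a h]
    · rw [hφ_ne a h]; exact le_max_left _ _
  have hl_le_φ : ∀ q ∈ K, l q ≤ φ q.1 := by
    intro q hq
    have hx : q.2 ∈ {x : Fin n → ℝ | (q.1, x) ∈ K} := by simpa using hq
    have hne : {x : Fin n → ℝ | (q.1, x) ∈ K} ≠ ∅ := Set.nonempty_iff_ne_empty.mp ⟨q.2, hx⟩
    rw [hφ_ne q.1 hne]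
    refine le_trans ?_ (le_max_right _ _)
    exact le_csSup (hfib_bdd q.1) ⟨q.2, hx, by simp⟩
  have hφ_ub : ∀ a, φ a ≤ B := by
    intro a
    by_cases h : {x : Fin n → ℝ | (a, x) ∈ K} = ∅
    · rw [hφ_empty a h]; linarith
    · rw [hφ_ne a h]
      refine max_le (by linarith) ?_
      refine le_trans (csSup_le ?_ ?_) hCB
      · exact (Set.nonempty_iff_ne_empty.mpr h).image _
      · rintro y ⟨x, hx, rfl⟩; exact (abs_le.mp (hC _ hx)).2
  -- g dominates φ
  set g : ℕ → (Fin m → ℝ) → ℝ := gAux K l M with hg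
  have hg_ge : ∀ k a, φ a ≤ g k a := by
    intro k a
    by_cases h : {x : Fin n → ℝ | (a, x) ∈ K} = ∅
    · rw [hφ_empty a h]; exact le_max_left _ _
    · rw [hφ_ne a h]
      refine max_le_max le_rfl (csSup_le_csSup (gAux_bddAbove hC k a) ?_ ?_)
      · exact (Set.nonempty_iff_ne_empty.mpr h).image _
      · rintro y ⟨x, hx, rfl⟩
        exact ⟨(a, x), hx, by simp⟩
  have hg_ub : ∀ k a, g k a ≤ B := by
    intro k a
    refine max_le (by linarith) (le_trans (csSup_le (hKne.image _) ?_) hCB)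
    rintro y ⟨q, hq, rfl⟩
    dsimp only
    have h0 : 0 ≤ (k : ℝ) * dist a q.1 := mul_nonneg (Nat.cast_nonneg k) dist_nonneg
    have := (abs_le.mp (hC q hq)).2
    linarith
  have hg_anti : ∀ a, Antitone (fun k => g k a) := fun a => gAux_antitone hKne hC a
  -- key: eventual closeness
  have hkey : ∀ (a : Fin m → ℝ) (ε : ℝ), 0 < ε → ∃ N : ℕ, g N a ≤ φ a + ε := by
    intro a ε hε
    by_contra hcon
    push_neg at hcon
    set t : ℕ → Set ((Fin m → ℝ) × (Fin n → ℝ)) :=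
      fun k => K ∩ {q | φ a + ε ≤ l q - (k : ℝ) * dist a q.1} with ht
    have htcl : ∀ k, IsClosed (t k) := by
      intro k
      exact hK.isClosed.inter (isClosed_le continuous_const
        (hl.sub (continuous_const.mul (continuous_const.dist continuous_fst))))
    have htsub : ∀ i, t (i + 1) ⊆ t i := by
      rintro i q ⟨hqK, hq2⟩
      refine ⟨hqK, ?_⟩
      simp only [Set.mem_setOf_eq] at hq2 ⊢
      have : (i : ℝ) * dist a q.1 ≤ ((i : ℝ) + 1) * dist a q.1 :=
        mul_le_mul_of_nonneg_right (by linarith) dist_nonneg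
      push_cast at hq2
      linarith
    have htne : ∀ k, (t k).Nonempty := by
      intro k
      have hlt : φ a + ε < g k a := hcon k
      have hlt2 : φ a + ε < sSup ((fun q => l q - (k : ℝ) * dist a q.1) '' K) := by
        rcases lt_max_iff.mp hlt with h | h
        · exfalso; have := hφ_lb a; linarith
        · exact h
      obtain ⟨y, ⟨q, hq, rfl⟩, hy⟩ := exists_lt_of_lt_csSup (hKne.image _) hlt2
      exact ⟨q, hq, le_of_lt hy⟩
    obtain ⟨q, hq⟩ := IsCompact.nonempty_iInter_of_sequence_nonempty_isCompact_isClosed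
      t htsub htne (hK.inter_right (isClosed_le continuous_const
        (hl.sub (continuous_const.mul (continuous_const.dist continuous_fst))))) htcl
    have hqK : q ∈ K := (Set.mem_iInter.mp hq 0).1
    have hqall : ∀ k : ℕ, φ a + ε ≤ l q - (k : ℝ) * dist a q.1 :=
      fun k => (Set.mem_iInter.mp hq k).2
    have hd : dist a q.1 = 0 := by
      by_contra hd0
      have hdpos : 0 < dist a q.1 := lt_of_le_of_ne dist_nonneg (Ne.symm hd0)
      obtain ⟨k, hk⟩ := exists_nat_gt ((l q - φ a - ε) / dist a q.1)
      have := hqall k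
      rw [div_lt_iff₀ hdpos] at hk
      linarith
    have haq : a = q.1 := dist_eq_zero.mp hd
    have h0 : φ a + ε ≤ l q := by have := hqall 0; rw [hd] at this; simpa using this
    have : l q ≤ φ a := by
      have := hl_le_φ q hqK
      rwa [← haq] at this
    linarith
  -- pointwise convergence
  have hconv : ∀ a, Tendsto (fun k => g k a) atTop (nhds (φ a)) := by
    intro a
    rw [Metric.tendsto_atTop]
    intro ε hε
    obtain ⟨N, hN⟩ := hkey a (ε / 2) (by linarith)
    refine ⟨N, fun k hk => ?_⟩
    have h1 : g k a ≤ g N a := hg_anti a hk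
    have h2 : φ a ≤ g k a := hg_ge k a
    rw [Real.dist_eq, abs_lt]
    constructor <;> linarith
  -- measurability and integrability
  have hg_cont : ∀ k, Continuous (g k) := fun k => gAux_continuous hKne hC k
  have hφ_meas : Measurable φ :=
    measurable_of_tendsto_metrizable (fun k => (hg_cont k).measurable)
      (tendsto_pi_nhds.mpr hconv)
  have hφ_abs : ∀ a, ‖φ a‖ ≤ B := by
    intro a
    rw [Real.norm_eq_abs, abs_le]
    exact ⟨by have := hφ_lb a; linarith, hφ_ub a⟩
  have hg_abs : ∀ k a, ‖g k a‖ ≤ B := by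
    intro k a
    rw [Real.norm_eq_abs, abs_le]
    have h1 := hg_ge k a
    have h2 := hφ_lb a
    exact ⟨by linarith, hg_ub k a⟩
  have hφ_int : Integrable φ μ :=
    ⟨hφ_meas.aestronglyMeasurable,
      HasFiniteIntegral.of_bounded (C := B) (Eventually.of_forall hφ_abs)⟩
  have hg_int : ∀ k, Integrable (g k) μ := by
    intro k
    exact ⟨(hg_cont k).aestronglyMeasurable,
      HasFiniteIntegral.of_bounded (C := B) (Eventually.of_forall (hg_abs k))⟩
  -- integral convergence of g
  have hint : Tendsto (fun k => ∫ a, g k a ∂μ) atTop (nhds (∫ a, φ a ∂μ)) := by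
    refine tendsto_integral_of_dominated_convergence (fun _ => B)
      (fun k => (hg_cont k).aestronglyMeasurable) (integrable_const B)
      (fun k => Eventually.of_forall (hg_abs k)) (Eventually.of_forall hconv)
  -- the constant `D`
  set V : ℝ := (volume Ca).toReal with hV
  have hV0 : 0 ≤ V := ENNReal.toReal_nonneg
  have hμuniv : (μ Set.univ).toReal = V := by
    rw [hμ, Measure.restrict_apply_univ]
  have hCameas : MeasurableSet Ca := hCa.isClosed.measurableSet
  -- per-j construction
  have H : ∀ j : ℕ, ∃ p : MvPolynomial (Fin m) ℝ,
      (∀ a ∈ Ca, φ a ≤ MvPolynomial.eval a p) ∧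
      |(∫ a, MvPolynomial.eval a p ∂μ) - ∫ a, φ a ∂μ| ≤ (1 / ((j : ℝ) + 1)) * (1 + 2 * V) := by
    intro j
    set ε : ℝ := 1 / ((j : ℝ) + 1) with hεdef
    have hε : 0 < ε := by positivity
    obtain ⟨N, hN⟩ := Metric.tendsto_atTop.mp hint ε hε
    have hNd : dist (∫ a, g N a ∂μ) (∫ a, φ a ∂μ) < ε := hN N le_rfl
    obtain ⟨p₀, hp₀⟩ := mv_poly_approx hCa (hg_cont N) hε
    refine ⟨p₀ + MvPolynomial.C ε, ?_, ?_⟩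
    · intro a ha
      have h1 := hp₀ a ha
      have h2 := hg_ge N a
      rw [abs_lt] at h1
      simp only [map_add, MvPolynomial.eval_C]
      linarith [h1.1, h1.2]
    · have hPeq : ∀ a, MvPolynomial.eval a (p₀ + MvPolynomial.C ε)
          = MvPolynomial.eval a p₀ + ε := by intro a; simp
      have hP_int : Integrable (fun a => MvPolynomial.eval a (p₀ + MvPolynomial.C ε)) μ := by
        rw [hμ]
        exact ContinuousOn.integrableOn_compact hCa (MvPolynomial.continuous_eval _).continuousOn
      have hsub : (∫ a, MvPolynomial.eval a (p₀ + MvPolynomial.C ε) ∂μ) - (∫ a, g N a ∂μ)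
          = ∫ a, (MvPolynomial.eval a (p₀ + MvPolynomial.C ε) - g N a) ∂μ :=
        (integral_sub hP_int (hg_int N)).symm
      have hbnd : ‖∫ a, (MvPolynomial.eval a (p₀ + MvPolynomial.C ε) - g N a) ∂μ‖
          ≤ (2 * ε) * V := by
        rw [← hμuniv]
        refine norm_integral_le_of_norm_le_const ?_
        rw [hμ]
        refine ae_restrict_of_forall_mem hCameas ?_
        intro a ha
        have h1 := hp₀ a ha
        rw [hPeq a, Real.norm_eq_abs, abs_le]
        rw [abs_lt] at h1
        constructor <;> linarith [h1.1, h1.2]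
      have hgd : |(∫ a, g N a ∂μ) - ∫ a, φ a ∂μ| < ε := by
        rw [← Real.dist_eq]; exact hNd
      rw [Real.norm_eq_abs, ← hsub] at hbnd
      calc |(∫ a, MvPolynomial.eval a (p₀ + MvPolynomial.C ε) ∂μ) - ∫ a, φ a ∂μ|
          ≤ |(∫ a, MvPolynomial.eval a (p₀ + MvPolynomial.C ε) ∂μ) - ∫ a, g N a ∂μ|
            + |(∫ a, g N a ∂μ) - ∫ a, φ a ∂μ| := abs_sub_le _ _ _
        _ ≤ 2 * ε * V + ε := by linarith
        _ = ε * (1 + 2 * V) := by ring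
  choose p hp1 hp2 using H
  refine ⟨p, ?_, ?_, ?_⟩
  · intro j q hq hq1
    exact (hl_le_φ q hq).trans (hp1 j q.1 hq1)
  · intro j a ha
    exact (hφ_lb a).trans (hp1 j a ha)
  · rw [tendsto_iff_dist_tendsto_zero]
    refine squeeze_zero (g := fun j : ℕ => (1 / ((j : ℝ) + 1)) * (1 + 2 * V))
      (fun j => dist_nonneg) (fun j => ?_) ?_
    · rw [Real.dist_eq]; exact hp2 j
    · have h := (tendsto_one_div_add_atTop_nhds_zero_nat).mul_const (1 + 2 * V)
      simpa using h
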